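/- Let ω ∈ ℝ^ℕ be a sequence of rationally independent real numbers, i.e. for every nonzero finitely supported k ∈ ℤ^ℕ, Σ_j k_j ω_j ≠ 0. Then for every θ ∈ 𝕋^ℕ the orbit {ωt + θ mod 2π : t ∈ ℝ} is dense in 𝕋^ℕ equipped with the product topology. -/

import Mathlib

section Stmt4AuxSection

open scoped Real ComplexConjugate
open MeasureTheory Complex Filter Topology Set Submodule Algebra AddCircle

set_option synthInstance.maxHeartbeats 800000
set_option maxHeartbeats 1600000
noncomputable section
namespace Stmt4Aux

local instance fact2pi : Fact (0 < 2 * π) := ⟨Real.two_pi_pos⟩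

variable (n : ℕ)

abbrev G := Fin n → AddCircle (2 * π)

/-- characters of the finite torus -/
def eChar (k : Fin n → ℤ) : C(G n, ℂ) :=
  ⟨fun x => ∏ j, fourier (k j) (x j), by
    exact continuous_finset_prod _ fun j _ =>
      (fourier (k j)).continuous.comp (continuous_apply j)⟩

@[simp] theorem eChar_apply (k : Fin n → ℤ) (x : G n) :
    eChar n k x = ∏ j, fourier (k j) (x j) := rfl

theorem eChar_zero : eChar n 0 = 1 := by
  ext x; simp [fourier_zero]

theorem eChar_add (k l : Fin n → ℤ) : eChar n (k + l) = eChar n k * eChar n l := by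
  ext x
  simp only [eChar_apply, ContinuousMap.mul_apply, ← Finset.prod_mul_distrib]
  exact Finset.prod_congr rfl fun j _ => by rw [Pi.add_apply, fourier_add]

theorem eChar_neg (k : Fin n → ℤ) : eChar n (-k) = star (eChar n k) := by
  ext x
  rw [ContinuousMap.star_apply, eChar_apply, eChar_apply, Complex.star_def, map_prod]
  exact Finset.prod_congr rfl fun j _ => by rw [Pi.neg_apply, fourier_neg]

/-- The star subalgebra generated by the characters. -/
def eAlg : StarSubalgebra ℂ C(G n, ℂ) where
  toSubalgebra := Algebra.adjoin ℂ (Set.range (eChar n))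
  star_mem' := by
    show Algebra.adjoin ℂ (Set.range (eChar n)) ≤ star (Algebra.adjoin ℂ (Set.range (eChar n)))
    refine adjoin_le ?_
    rintro - ⟨k, rfl⟩
    exact subset_adjoin ⟨-k, eChar_neg n k⟩

theorem eAlg_coe :
    Subalgebra.toSubmodule (eAlg n).toSubalgebra = span ℂ (Set.range (eChar n)) := by
  apply adjoin_eq_span_of_subset
  refine Subset.trans ?_ Submodule.subset_span
  intro x hx
  refine Submonoid.closure_induction (fun _ => id) ⟨0, (eChar_zero n).symm ▸ rfl⟩ ?_ hx
  · rintro - - - - ⟨k, rfl⟩ ⟨l, rfl⟩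
    exact ⟨k + l, eChar_add n k l⟩

theorem eAlg_separatesPoints : (eAlg n).SeparatesPoints := by
  intro x y hxy
  obtain ⟨j, hj⟩ : ∃ j, x j ≠ y j := by
    by_contra h; push_neg at h; exact hxy (funext h)
  refine ⟨_, ⟨eChar n (Pi.single j 1), subset_adjoin ⟨_, rfl⟩, rfl⟩, ?_⟩
  have key : ∀ z : G n, eChar n (Pi.single j 1) z = fourier 1 (z j) := by
    intro z
    rw [eChar_apply]
    rw [Finset.prod_eq_single j (fun i _ hi => by
      rw [Pi.single_eq_of_ne hi, fourier_zero]) (by simp)]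
    rw [Pi.single_eq_same]
  dsimp only
  rw [key, key]
  simp only [fourier_one]
  intro h
  rw [Circle.coe_inj] at h
  exact hj (injective_toCircle Real.two_pi_pos.ne' h)

theorem eAlg_closure_eq_top : (eAlg n).topologicalClosure = ⊤ :=
  ContinuousMap.starSubalgebra_topologicalClosure_eq_top_of_separatesPoints _
    (eAlg_separatesPoints n)

theorem span_eChar_closure_eq_top :
    (span ℂ (Set.range (eChar n))).topologicalClosure = ⊤ := by
  rw [← eAlg_coe]
  exact congr_arg (Subalgebra.toSubmodule <| StarSubalgebra.toSubalgebra ·)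
    (eAlg_closure_eq_top n)


theorem integral_fourier_ne_zero {m : ℤ} (hm : m ≠ 0) :
    ∫ y : AddCircle (2 * π), fourier m y = 0 := by
  rw [volume_eq_smul_haarAddCircle, integral_smul_measure,
    integral_eq_zero_of_add_right_eq_neg (μ := haarAddCircle)
      (fourier_add_half_inv_index hm Real.two_pi_pos), smul_zero]

theorem integral_eChar_ne_zero {k : Fin n → ℤ} (hk : k ≠ 0) :
    ∫ x : G n, eChar n k x = 0 := by
  have : ∫ x : G n, eChar n k x = ∏ j, ∫ y : AddCircle (2 * π), fourier (k j) y :=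
    integral_fintype_prod_eq_prod (fun j (y : AddCircle (2 * π)) => fourier (k j) y)
  rw [this]
  obtain ⟨j, hj⟩ : ∃ j, k j ≠ 0 := by
    by_contra h; push_neg at h; exact hk (funext h)
  exact Finset.prod_eq_zero (Finset.mem_univ j) (integral_fourier_ne_zero hj)

theorem integral_eChar_zero :
    ∫ x : G n, eChar n 0 x = ((volume : Measure (G n)) Set.univ).toReal := by
  simp [eChar_zero]; rfl

theorem eChar_flow (k : Fin n → ℤ) (v : Fin n → ℝ) (t : ℝ) :
    eChar n k (fun j => ((v j * t : ℝ) : AddCircle (2 * π))) =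
      Complex.exp ((((∑ j, (k j : ℝ) * v j) * t : ℝ) : ℂ) * Complex.I) := by
  have h2 : (2 * (π : ℂ)) ≠ 0 := by
    simp [Real.pi_ne_zero, Complex.ofReal_ne_zero]
  simp only [eChar_apply, fourier_coe_apply, ← Complex.exp_sum]
  congr 1
  push_cast
  rw [Finset.sum_mul, Finset.sum_mul]
  refine Finset.sum_congr rfl fun j _ => ?_
  field_simp

theorem key_tendsto (v : Fin n → ℝ)
    (hv : ∀ k : Fin n → ℤ, k ≠ 0 → (∑ j, (k j : ℝ) * v j) ≠ 0) (k : Fin n → ℤ) :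
    Tendsto (fun T : ℝ => (1 / (T : ℂ)) *
        ∫ t in (0:ℝ)..T, eChar n k (fun j => ((v j * t : ℝ) : AddCircle (2 * π))))
      atTop (𝓝 (if k = 0 then 1 else 0)) := by
  by_cases hk : k = 0
  · simp only [hk, if_pos rfl]
    have h1 : ∀ t : ℝ, eChar n 0 (fun j => ((v j * t : ℝ) : AddCircle (2 * π))) = 1 := by
      intro t; rw [eChar_zero]; rfl
    refine Tendsto.congr' ?_ (tendsto_const_nhds (x := (1:ℂ)))
    filter_upwards [eventually_gt_atTop (0:ℝ)] with T hT
    have hT' : (T : ℂ) ≠ 0 := by exact_mod_cast hT.ne'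
    simp only [h1, intervalIntegral.integral_const, sub_zero, real_smul, smul_eq_mul, mul_one]
    field_simp
  · simp only [if_neg hk]
    set lam : ℝ := ∑ j, (k j : ℝ) * v j with hlam
    have hlam0 : lam ≠ 0 := hv k hk
    have hc : ((lam : ℂ) * Complex.I) ≠ 0 :=
      mul_ne_zero (Complex.ofReal_ne_zero.2 hlam0) Complex.I_ne_zero
    have h1 : ∀ t : ℝ, eChar n k (fun j => ((v j * t : ℝ) : AddCircle (2 * π))) =
        Complex.exp (((lam : ℂ) * Complex.I) * t) := by
      intro t
      rw [eChar_flow]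
      congr 1
      rw [hlam]
      push_cast
      ring
    simp only [h1]
    have h2 : ∀ T : ℝ, (∫ t in (0:ℝ)..T, Complex.exp (((lam : ℂ) * Complex.I) * t)) =
        (Complex.exp (((lam : ℂ) * Complex.I) * T) - 1) / ((lam : ℂ) * Complex.I) := by
      intro T
      rw [integral_exp_mul_complex hc]
      norm_num
    simp only [h2]
    apply squeeze_zero_norm' (a := fun T : ℝ => 2 / ‖(lam : ℂ) * Complex.I‖ / T)
    · filter_upwards [eventually_gt_atTop (0:ℝ)] with T hT
      have hexp : ‖Complex.exp (((lam : ℂ) * Complex.I) * T)‖ = 1 := by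
        rw [show ((lam : ℂ) * Complex.I) * T = ((lam * T : ℝ) : ℂ) * Complex.I by push_cast; ring]
        exact Complex.norm_exp_ofReal_mul_I _
      have hnum : ‖Complex.exp (((lam : ℂ) * Complex.I) * T) - 1‖ ≤ 2 := by
        calc ‖Complex.exp (((lam : ℂ) * Complex.I) * T) - 1‖
            ≤ ‖Complex.exp (((lam : ℂ) * Complex.I) * T)‖ + ‖(1:ℂ)‖ :=
              (norm_sub_le _ _)
          _ ≤ 2 := by rw [hexp]; norm_num
      rw [norm_mul, norm_div, norm_div]
      simp only [norm_one, Complex.norm_real, Real.norm_eq_abs]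
      have hB : 0 < ‖(lam:ℂ) * Complex.I‖ := norm_pos_iff.mpr hc
      rw [abs_of_pos hT]
      calc 1 / T * (‖Complex.exp (↑lam * Complex.I * ↑T) - 1‖ / ‖↑lam * Complex.I‖)
          ≤ 1 / T * (2 / ‖↑lam * Complex.I‖) := by gcongr
        _ = 2 / ‖↑lam * Complex.I‖ / T := by ring

    · simp only [div_div_eq_mul_div, div_eq_mul_inv]
      simpa [div_eq_mul_inv] using (tendsto_const_nhds (x := 2 / ‖(lam : ℂ) * Complex.I‖)
        (f := atTop (α := ℝ))).div_atTop tendsto_id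

theorem denseRange_flow (v : Fin n → ℝ)
    (hv : ∀ k : Fin n → ℤ, k ≠ 0 → (∑ j, (k j : ℝ) * v j) ≠ 0) :
    DenseRange (fun t : ℝ => (fun j => ((v j * t : ℝ) : AddCircle (2 * π)) : G n)) := by
  set φ : ℝ → G n := fun t => fun j => ((v j * t : ℝ) : AddCircle (2 * π)) with hφ
  have φcont : Continuous φ := by
    refine continuous_pi fun j => ?_
    exact (AddCircle.continuous_mk' _).comp (continuous_const.mul continuous_id)
  by_contra hdr
  obtain ⟨x₀, hx₀⟩ : ∃ x₀ : G n, x₀ ∉ closure (Set.range φ) := by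
    by_contra h; push_neg at h; exact hdr fun x => h x
  obtain ⟨ε, hε, hball⟩ := Metric.isOpen_iff.1 isClosed_closure.isOpen_compl x₀ hx₀
  -- the bump function
  set f : G n → ℝ := fun x => max 0 (1 - dist x x₀ / ε) with hf
  have fcont : Continuous f :=
    continuous_const.max (continuous_const.sub ((continuous_id.dist continuous_const).div_const ε))
  have f0 : ∀ t : ℝ, f (φ t) = 0 := by
    intro t
    have : ¬ (φ t ∈ Metric.ball x₀ ε) := fun h => (hball h) (subset_closure ⟨t, rfl⟩)
    rw [Metric.mem_ball] at this
    push_neg at this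
    have h1 : 1 - dist (φ t) x₀ / ε ≤ 0 := by
      rw [sub_nonpos, le_div_iff₀ hε, one_mul]; exact this
    simp [hf, max_eq_left h1]
  have fx₀ : f x₀ = 1 := by simp [hf]
  have fnn : ∀ x, 0 ≤ f x := fun x => le_max_left _ _
  have fle : ∀ x, f x ≤ 1 := fun x => by
    apply max_le (by norm_num)
    have : 0 ≤ dist x x₀ / ε := by positivity
    linarith
  have fint : Integrable f (volume : Measure (G n)) :=
    fcont.integrable_of_hasCompactSupport (HasCompactSupport.of_compactSpace _)
  set a : ℝ := ∫ x, f x with ha_def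
  have ha : 0 < a := by
    rw [ha_def]
    rw [integral_pos_iff_support_of_nonneg fnn fint]
    have hsub : Metric.ball x₀ ε ⊆ Function.support f := by
      intro x hx
      rw [Metric.mem_ball] at hx
      have : 0 < 1 - dist x x₀ / ε := by
        rw [sub_pos, div_lt_one hε]; exact hx
      simp only [Function.mem_support, hf]
      rw [max_eq_right this.le]
      exact this.ne'
    exact lt_of_lt_of_le (Metric.measure_ball_pos _ x₀ hε) (measure_mono hsub)
  -- complex continuous version of f
  set F : C(G n, ℂ) := ⟨fun x => (f x : ℂ), Complex.continuous_ofReal.comp fcont⟩ with hF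
  have hFint : Integrable (fun x => F x) (volume : Measure (G n)) :=
    F.continuous.integrable_of_hasCompactSupport (HasCompactSupport.of_compactSpace _)
  have hFI : (∫ x, F x) = (a : ℂ) := by
    rw [ha_def]; exact integral_ofReal
  set Vr : ℝ := ((volume : Measure (G n)) Set.univ).toReal with hVr_def
  have hVr : 0 < Vr := by
    rw [hVr_def]
    exact ENNReal.toReal_pos (isOpen_univ.measure_pos volume ⟨x₀, trivial⟩).ne'
      (measure_lt_top _ _).ne
  set δ : ℝ := a / (3 * Vr) with hδ_def
  have hδ : 0 < δ := div_pos ha (mul_pos (by norm_num) hVr)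
  -- approximate F by a trigonometric polynomial P
  obtain ⟨P, hP, hPF⟩ : ∃ P ∈ span ℂ (Set.range (eChar n)), ‖F - P‖ < δ := by
    have hFmem : F ∈ closure ((span ℂ (Set.range (eChar n)) :
        Submodule ℂ C(G n, ℂ)) : Set C(G n, ℂ)) := by
      rw [← Submodule.topologicalClosure_coe, span_eChar_closure_eq_top n]
      trivial
    obtain ⟨P, hPmem, hd⟩ := Metric.mem_closure_iff.1 hFmem δ hδ
    exact ⟨P, hPmem, by rwa [dist_eq_norm] at hd⟩
  obtain ⟨c, hc⟩ := Finsupp.mem_span_range_iff_exists_finsupp.1 hP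
  have hPx : ∀ x, P x = ∑ k ∈ c.support, c k * eChar n k x := by
    intro x
    rw [← hc, Finsupp.sum, ContinuousMap.sum_apply]
    exact Finset.sum_congr rfl fun k _ => rfl
  have echint : ∀ k : Fin n → ℤ, Integrable (fun x => eChar n k x) (volume : Measure (G n)) :=
    fun k => (eChar n k).continuous.integrable_of_hasCompactSupport
      (HasCompactSupport.of_compactSpace _)
  have hPint : Integrable (fun x => P x) (volume : Measure (G n)) :=
    P.continuous.integrable_of_hasCompactSupport (HasCompactSupport.of_compactSpace _)
  -- the space integral of P
  have hPI : (∫ x, P x) = c 0 * (Vr : ℂ) := by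
    calc (∫ x, P x) = ∫ x, ∑ k ∈ c.support, c k * eChar n k x := by
          refine integral_congr_ae (Filter.Eventually.of_forall fun x => hPx x)
      _ = ∑ k ∈ c.support, ∫ x, c k * eChar n k x :=
          integral_finset_sum _ (fun k _ => (echint k).const_mul _)
      _ = ∑ k ∈ c.support, c k * ∫ x, eChar n k x := by
          refine Finset.sum_congr rfl fun k _ => integral_const_mul _ _
      _ = ∑ k ∈ c.support, (if k = 0 then c k * (Vr : ℂ) else 0) := by
          refine Finset.sum_congr rfl fun k _ => ?_
          by_cases hk : k = 0
          · subst hk; rw [if_pos rfl, integral_eChar_zero]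
          · rw [if_neg hk, integral_eChar_ne_zero n hk, mul_zero]
      _ = c 0 * (Vr : ℂ) := by
          rw [Finset.sum_ite_eq' c.support 0 (fun k => c k * (Vr : ℂ))]
          by_cases h0 : (0 : Fin n → ℤ) ∈ c.support
          · rw [if_pos h0]
          · rw [if_neg h0, Finsupp.notMem_support_iff.1 h0, zero_mul]
  -- first bound
  have hbound1 : ‖(a : ℂ) - c 0 * (Vr : ℂ)‖ ≤ δ * Vr := by
    have hsub : (∫ x, (F x - P x)) = (a : ℂ) - c 0 * (Vr : ℂ) := by
      rw [integral_sub hFint hPint, hFI, hPI]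
    rw [← hsub, hVr_def]
    refine norm_integral_le_of_norm_le_const (Filter.Eventually.of_forall fun x => ?_)
    calc ‖F x - P x‖ = ‖(F - P) x‖ := by rw [ContinuousMap.sub_apply]
      _ ≤ ‖F - P‖ := ContinuousMap.norm_coe_le_norm _ _
      _ ≤ δ := hPF.le
  -- the time average of P along the flow
  set A : ℝ → ℂ := fun T => (1 / (T : ℂ)) * ∫ t in (0:ℝ)..T, P (φ t) with hA
  have hA_tendsto : Tendsto A atTop (𝓝 (c 0)) := by
    have h1 : ∀ T : ℝ, A T =
        ∑ k ∈ c.support, c k * ((1 / (T : ℂ)) * ∫ t in (0:ℝ)..T, eChar n k (φ t)) := by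
      intro T
      rw [hA]
      simp only
      rw [show (fun t => P (φ t)) = fun t => ∑ k ∈ c.support, c k * eChar n k (φ t) from
        funext fun t => hPx (φ t)]
      rw [intervalIntegral.integral_finset_sum (fun k _ =>
        (Continuous.intervalIntegrable (by
          exact continuous_const.mul ((eChar n k).continuous.comp φcont)) _ _))]
      rw [Finset.mul_sum]
      refine Finset.sum_congr rfl fun k _ => ?_
      rw [intervalIntegral.integral_const_mul]
      ring
    have h2 : Tendsto (fun T : ℝ =>
        ∑ k ∈ c.support, c k * ((1 / (T : ℂ)) * ∫ t in (0:ℝ)..T, eChar n k (φ t))) atTop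
        (𝓝 (∑ k ∈ c.support, c k * (if k = 0 then 1 else 0))) :=
      tendsto_finset_sum _ fun k _ => (key_tendsto n v hv k).const_mul _
    have h3 : (∑ k ∈ c.support, c k * (if k = 0 then (1:ℂ) else 0)) = c 0 := by
      simp only [mul_ite, mul_one, mul_zero]
      rw [Finset.sum_ite_eq' c.support 0 (fun k => c k)]
      by_cases h0 : (0 : Fin n → ℤ) ∈ c.support
      · rw [if_pos h0]
      · rw [if_neg h0, Finsupp.notMem_support_iff.1 h0]
    rw [show A = fun T : ℝ =>
        ∑ k ∈ c.support, c k * ((1 / (T : ℂ)) * ∫ t in (0:ℝ)..T, eChar n k (φ t)) from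
      funext h1]
    rwa [h3] at h2
  -- the time average is bounded by δ
  have hAbound : ∀ᶠ T in atTop, ‖A T‖ ≤ δ := by
    filter_upwards [eventually_gt_atTop (0:ℝ)] with T hT
    rw [hA]
    simp only
    have hb : ‖∫ t in (0:ℝ)..T, P (φ t)‖ ≤ δ * |T - 0| := by
      apply intervalIntegral.norm_integral_le_of_norm_le_const
      intro t ht
      have hFφ : F (φ t) = 0 := by
        show ((f (φ t) : ℝ) : ℂ) = 0
        rw [f0 t]; norm_num
      calc ‖P (φ t)‖ = ‖(F - P) (φ t)‖ := by
            rw [ContinuousMap.sub_apply, hFφ, zero_sub, norm_neg]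
        _ ≤ ‖F - P‖ := ContinuousMap.norm_coe_le_norm _ _
        _ ≤ δ := hPF.le
    rw [norm_mul]
    have h1T : ‖1 / (T : ℂ)‖ = 1 / T := by
      rw [norm_div, norm_one, Complex.norm_real, Real.norm_eq_abs, abs_of_pos hT]
    rw [h1T]
    calc (1 / T) * ‖∫ t in (0:ℝ)..T, P (φ t)‖ ≤ (1 / T) * (δ * |T - 0|) := by
          apply mul_le_mul_of_nonneg_left hb (by positivity)
      _ = δ := by rw [sub_zero, abs_of_pos hT]; field_simp
  have hc0 : ‖c 0‖ ≤ δ := le_of_tendsto hA_tendsto.norm hAbound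
  -- conclude
  have hfinal : a ≤ 2 * (δ * Vr) := by
    have h1 : ‖(a : ℂ)‖ ≤ ‖(a : ℂ) - c 0 * (Vr : ℂ)‖ + ‖c 0 * (Vr : ℂ)‖ := by
      have := norm_add_le ((a : ℂ) - c 0 * (Vr : ℂ)) (c 0 * (Vr : ℂ))
      rwa [sub_add_cancel] at this
    have h2 : ‖(a : ℂ)‖ = a := by
      rw [Complex.norm_real, Real.norm_eq_abs, abs_of_pos ha]
    have h3 : ‖c 0 * (Vr : ℂ)‖ ≤ δ * Vr := by
      rw [norm_mul, Complex.norm_real, Real.norm_eq_abs, abs_of_pos hVr]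
      exact mul_le_mul_of_nonneg_right hc0 hVr.le
    rw [h2] at h1
    linarith
  have hδVr : δ * Vr = a / 3 := by
    rw [hδ_def]; field_simp
  rw [hδVr] at hfinal
  linarith


theorem stmt4_aux (ω : ℕ → ℝ)
    (hindep : ∀ k : ℕ →₀ ℤ, k ≠ 0 → (∑ j ∈ k.support, (k j : ℝ) * ω j) ≠ 0)
    (θ : ℕ → AddCircle (2 * π)) :
    Dense {x : ℕ → AddCircle (2 * π) |
      ∃ t : ℝ, x = fun j => ((ω j * t : ℝ) : AddCircle (2 * π)) + θ j} := by
  rw [dense_iff_inter_open]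
  rintro U hU ⟨x, hx⟩
  obtain ⟨I, u, hu, hI⟩ := isOpen_pi_iff.1 hU x hx
  set m := I.card with hm
  set emb : Fin m → ℕ := fun j => ((I.equivFin.symm j : I) : ℕ) with hemb
  have hembI : ∀ j, emb j ∈ I := fun j => (I.equivFin.symm j).2
  have hembinj : Function.Injective emb := fun j j' h => by
    apply I.equivFin.symm.injective
    exact Subtype.ext h
  set v : Fin m → ℝ := fun j => ω (emb j) with hv_def
  have hv : ∀ k : Fin m → ℤ, k ≠ 0 → (∑ j, (k j : ℝ) * v j) ≠ 0 := by
    intro k hk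
    set K : ℕ →₀ ℤ := Finsupp.embDomain ⟨emb, hembinj⟩ (Finsupp.equivFunOnFinite.symm k) with hK
    have hK0 : K ≠ 0 := by
      rw [hK, Ne, Finsupp.embDomain_eq_zero]
      intro h
      apply hk
      have := congrArg Finsupp.equivFunOnFinite h
      exact (by simpa using this : k = Finsupp.equivFunOnFinite 0).trans rfl
    have hsum : (∑ j ∈ K.support, (K j : ℝ) * ω j) = ∑ j, (k j : ℝ) * v j := by
      rw [show (∑ j ∈ K.support, (K j : ℝ) * ω j) = K.sum (fun i z => (z : ℝ) * ω i) from rfl]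
      rw [hK, Finsupp.sum_embDomain]
      rw [Finsupp.sum_fintype _ _ (fun i => by norm_num)]
      refine Finset.sum_congr rfl fun j _ => by
        simp [hv_def]
    rw [← hsum]
    exact hindep K hK0
  have hdense := denseRange_flow m v hv
  -- the target open set in the finite torus
  set W : Set (G m) := Set.pi Set.univ
    (fun j => (fun z => z + θ (emb j)) ⁻¹' u (emb j)) with hW
  have hWopen : IsOpen W := by
    refine isOpen_set_pi Set.finite_univ fun j _ => ?_
    exact (hu (emb j) (hembI j)).1.preimage (continuous_add_right _)
  have hWne : W.Nonempty := by
    refine ⟨fun j => x (emb j) - θ (emb j), fun j _ => ?_⟩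
    simp only [Set.mem_preimage, sub_add_cancel]
    exact (hu (emb j) (hembI j)).2
  obtain ⟨t, ht⟩ := hdense.exists_mem_open hWopen hWne
  refine ⟨fun j => ((ω j * t : ℝ) : AddCircle (2 * π)) + θ j, ?_, ⟨t, rfl⟩⟩
  apply hI
  intro i hi
  have h1 : emb (I.equivFin ⟨i, hi⟩) = i := by
    simp [hemb]
  have := ht (I.equivFin ⟨i, hi⟩) (Set.mem_univ _)
  rw [Set.mem_preimage] at this
  rw [h1] at this
  simp only at this ⊢
  rw [show v (I.equivFin ⟨i, hi⟩) = ω i from by rw [hv_def]; simp only; rw [h1]] at this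
  exact this

end Stmt4Aux
end
end Stmt4AuxSection

open scoped Real

/-- for rationally independent frequencies `ω`, every orbit of the
linear flow `t ↦ ωt + θ` is dense in the infinite torus `𝕋^ℕ = (ℝ/2πℤ)^ℕ`
with the product topology. -/
theorem stmt4 (ω : ℕ → ℝ)
    (hindep : ∀ k : ℕ →₀ ℤ, k ≠ 0 → (∑ j ∈ k.support, (k j : ℝ) * ω j) ≠ 0)
    (θ : ℕ → AddCircle (2 * π)) :
    Dense {x : ℕ → AddCircle (2 * π) |
      ∃ t : ℝ, x = fun j => ((ω j * t : ℝ) : AddCircle (2 * π)) + θ j} :=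
  Stmt4Aux.stmt4_aux ω hindep θ
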